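/- For every y ∈ (0,1) and every real number x with erfc(x) = y, one has x < √(ln(2/(√(8y + 1) − 1))). (That is, inverfc(y) < √(ln(2/(√(8y+1) − 1))) for all 0 < y < 1.) -/

import Mathlib

open Real

set_option maxHeartbeats 1000000

/-- The Gauss error function `erf x = (2/√π) ∫₀ˣ e^{−t²} dt`. -/
noncomputable def erf (x : ℝ) : ℝ := 2 / Real.sqrt Real.pi * ∫ t in (0:ℝ)..x, Real.exp (-t ^ 2)

/-- The complementary error function `erfc x = 1 - erf x`. -/
noncomputable def erfc (x : ℝ) : ℝ := 1 - erf x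

lemma cubic_le_exp_neg (a : ℝ) (ha : 0 ≤ a) :
    1 - a + a ^ 2 / 2 - a ^ 3 / 6 ≤ Real.exp (-a) := by
  have key : ∀ t : ℝ, HasDerivAt (fun t : ℝ => (1 - t + t ^ 2 / 2 - t ^ 3 / 6) * Real.exp t)
      (-t ^ 3 / 6 * Real.exp t) t := by
    intro t
    have hp : HasDerivAt (fun t : ℝ => 1 - t + t ^ 2 / 2 - t ^ 3 / 6)
        (-1 + t - t ^ 2 / 2) t := by
      have h1 : HasDerivAt (fun t : ℝ => t ^ 2) (2 * t ^ 1) t := hasDerivAt_pow 2 t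
      have h2 : HasDerivAt (fun t : ℝ => t ^ 3) (3 * t ^ 2) t := hasDerivAt_pow 3 t
      have := (((hasDerivAt_id t).const_sub 1).add (h1.div_const 2)).sub (h2.div_const 6)
      exact this.congr_deriv (by ring)
    have := hp.mul (Real.hasDerivAt_exp t)
    exact this.congr_deriv (by ring)
  have hanti : AntitoneOn (fun t : ℝ => (1 - t + t ^ 2 / 2 - t ^ 3 / 6) * Real.exp t)
      (Set.Ici (0 : ℝ)) := by
    apply antitoneOn_of_deriv_nonpos (convex_Ici 0)
    · exact (Continuous.mul (by continuity) Real.continuous_exp).continuousOn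
    · intro t ht
      exact ((key t).differentiableAt).differentiableWithinAt
    · intro t ht
      rw [(key t).deriv]
      simp only [Set.mem_Ioi, interior_Ici] at ht
      have : (0:ℝ) ≤ t ^ 3 := by positivity
      nlinarith [Real.exp_pos t]
  have h := hanti (Set.mem_Ici.2 le_rfl) (Set.mem_Ici.2 ha) ha
  simp only [Real.exp_zero, mul_one] at h
  norm_num at h
  have hea : 0 < Real.exp a := Real.exp_pos a
  rw [Real.exp_neg, inv_eq_one_div]
  exact (le_div_iff₀ hea).2 h

lemma exp_neg_sq_continuous : Continuous (fun t : ℝ => Real.exp (-t ^ 2)) := by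
  continuity

lemma int_lower (x : ℝ) (hx : 0 ≤ x) :
    x - x ^ 3 / 3 ≤ ∫ t in (0:ℝ)..x, Real.exp (-t ^ 2) := by
  have hcalc : ∫ t in (0:ℝ)..x, (1 - t ^ 2) = x - x ^ 3 / 3 := by
    rw [intervalIntegral.integral_sub intervalIntegrable_const
      (Continuous.intervalIntegrable (by continuity) 0 x)]
    simp [integral_pow]
    ring
  rw [← hcalc]
  apply intervalIntegral.integral_mono_on hx
    (Continuous.intervalIntegrable (by continuity) 0 x)
    (exp_neg_sq_continuous.intervalIntegrable 0 x)
  intro t ht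
  have := Real.add_one_le_exp (-t ^ 2)
  linarith

lemma exp_neg_sq_integrableOn (x : ℝ) :
    MeasureTheory.IntegrableOn (fun t : ℝ => Real.exp (-t ^ 2)) (Set.Ioi x) := by
  have h : (fun t : ℝ => Real.exp (-t ^ 2)) = fun t : ℝ => Real.exp (-1 * t ^ 2) := by
    ext t; ring_nf
  rw [h]
  exact (integrable_exp_neg_mul_sq one_pos).integrableOn

lemma erfc_eq_tail (x : ℝ) (hx : 0 ≤ x) :
    erfc x = 2 / Real.sqrt Real.pi * ∫ t in Set.Ioi x, Real.exp (-t ^ 2) := by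
  have hs : (0:ℝ) < Real.sqrt Real.pi := Real.sqrt_pos.2 Real.pi_pos
  have h0 : ∫ t in Set.Ioi (0:ℝ), Real.exp (-t ^ 2) = Real.sqrt Real.pi / 2 := by
    have h := integral_gaussian_Ioi 1
    simp only [neg_one_mul, div_one] at h
    convert h using 2 with t
    
  have hsplit : (∫ t in Set.Ioi (0:ℝ), Real.exp (-t ^ 2)) =
      (∫ t in Set.Ioc (0:ℝ) x, Real.exp (-t ^ 2)) + ∫ t in Set.Ioi x, Real.exp (-t ^ 2) := by
    rw [← Set.Ioc_union_Ioi_eq_Ioi hx]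
    exact MeasureTheory.setIntegral_union (Set.Ioc_disjoint_Ioi le_rfl) measurableSet_Ioi
      ((exp_neg_sq_integrableOn 0).mono_set Set.Ioc_subset_Ioi_self)
      (exp_neg_sq_integrableOn x)
  have hIoc : (∫ t in (0:ℝ)..x, Real.exp (-t ^ 2))
      = ∫ t in Set.Ioc (0:ℝ) x, Real.exp (-t ^ 2) := intervalIntegral.integral_of_le hx
  rw [erfc, erf, hIoc]
  have : (∫ t in Set.Ioc (0:ℝ) x, Real.exp (-t ^ 2))
      = Real.sqrt Real.pi / 2 - ∫ t in Set.Ioi x, Real.exp (-t ^ 2) := by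
    rw [← h0, hsplit]; ring
  rw [this]
  field_simp
  ring

lemma tail_le (x : ℝ) (hx : 0 < x) :
    (∫ t in Set.Ioi x, Real.exp (-t ^ 2)) ≤ Real.exp (-x ^ 2) / (2 * x) := by
  have hd : ∀ t ∈ Set.Ici x, HasDerivAt (fun t : ℝ => -Real.exp (-t ^ 2) / 2)
      (t * Real.exp (-t ^ 2)) t := by
    intro t _
    have h1 : HasDerivAt (fun t : ℝ => -t ^ 2) (-(2 * t ^ 1)) t := (hasDerivAt_pow 2 t).neg
    have h2 := (h1.exp).neg.div_const 2
    exact h2.congr_deriv (by ring)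
  have hnn : ∀ t ∈ Set.Ioi x, 0 ≤ t * Real.exp (-t ^ 2) := by
    intro t ht
    have : 0 < t := lt_trans hx ht
    positivity
  have hten : Filter.Tendsto (fun t : ℝ => -Real.exp (-t ^ 2) / 2) Filter.atTop (nhds 0) := by
    have h1 : Filter.Tendsto (fun t : ℝ => -t ^ 2) Filter.atTop Filter.atBot := by
      have := (Filter.tendsto_pow_atTop (α := ℝ) (n := 2) (by norm_num))
      exact Filter.tendsto_neg_atBot_iff.2 this
    have h2 : Filter.Tendsto (fun t : ℝ => Real.exp (-t ^ 2)) Filter.atTop (nhds 0) :=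
      Real.tendsto_exp_atBot.comp h1
    have := (h2.neg).div_const 2
    simpa using this
  have hTint : (∫ t in Set.Ioi x, t * Real.exp (-t ^ 2)) = Real.exp (-x ^ 2) / 2 := by
    have := MeasureTheory.integral_Ioi_of_hasDerivAt_of_nonneg' hd hnn hten
    rw [this]
    ring
  have hInt : MeasureTheory.IntegrableOn (fun t : ℝ => t * Real.exp (-t ^ 2)) (Set.Ioi x) :=
    MeasureTheory.integrableOn_Ioi_deriv_of_nonneg' hd hnn hten
  have hmono : (∫ t in Set.Ioi x, Real.exp (-t ^ 2))
      ≤ ∫ t in Set.Ioi x, (1 / x) * (t * Real.exp (-t ^ 2)) := by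
    apply MeasureTheory.setIntegral_mono_on (exp_neg_sq_integrableOn x)
      (hInt.const_mul (1 / x)) measurableSet_Ioi
    intro t ht
    have htx : x < t := ht
    have he : 0 < Real.exp (-t ^ 2) := Real.exp_pos _
    rw [div_mul_eq_mul_div, one_mul, le_div_iff₀ hx]
    nlinarith
  calc (∫ t in Set.Ioi x, Real.exp (-t ^ 2))
      ≤ ∫ t in Set.Ioi x, (1 / x) * (t * Real.exp (-t ^ 2)) := hmono
    _ = (1 / x) * ∫ t in Set.Ioi x, t * Real.exp (-t ^ 2) :=
        MeasureTheory.integral_const_mul _ _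
    _ = Real.exp (-x ^ 2) / (2 * x) := by rw [hTint]; field_simp

lemma two_erfc_lt (x : ℝ) (hx : 0 < x) :
    2 * erfc x < Real.exp (-x ^ 2) + Real.exp (-x ^ 2) ^ 2 := by
  have hs : (0:ℝ) < Real.sqrt Real.pi := Real.sqrt_pos.2 Real.pi_pos
  have hsu : Real.sqrt Real.pi ≤ 1.7725 := by
    rw [show (1.7725:ℝ) = Real.sqrt (1.7725 ^ 2) by rw [Real.sqrt_sq]; norm_num]
    apply Real.sqrt_le_sqrt
    nlinarith [Real.pi_lt_d4]
  have hsl : (1.7724:ℝ) ≤ Real.sqrt Real.pi := by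
    rw [show (1.7724:ℝ) = Real.sqrt (1.7724 ^ 2) by rw [Real.sqrt_sq]; norm_num]
    apply Real.sqrt_le_sqrt
    nlinarith [Real.pi_gt_d4]
  have hA := cubic_le_exp_neg (x ^ 2) (by positivity)
  have huing : Real.exp (-(2 * x ^ 2)) = Real.exp (-x ^ 2) ^ 2 := by
    rw [← Real.exp_nat_mul]; ring_nf
  rcases le_or_gt x (3 / 4) with hle | hgt
  · -- small x : polynomial lower bound for erf
    have hI := int_lower x hx.le
    have hB := cubic_le_exp_neg (2 * x ^ 2) (by positivity)
    rw [huing] at hB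
    have herfc : erfc x ≤ 1 - 2 / Real.sqrt Real.pi * (x - x ^ 3 / 3) := by
      rw [erfc, erf]
      have h2s : 0 < 2 / Real.sqrt Real.pi := by positivity
      nlinarith [hI]
    have hxx : 0 ≤ x - x ^ 3 / 3 := by nlinarith
    have hkey : 2 / Real.sqrt Real.pi * (x - x ^ 3 / 3) ≥ 2 / 1.7725 * (x - x ^ 3 / 3) := by
      apply mul_le_mul_of_nonneg_right _ hxx
      apply div_le_div_of_nonneg_left (by norm_num) hs hsu
    have hpoly : 3*x^2 - 2.5*x^4 + 1.5*x^6 < 2/1.7725 * (2*(x - x^3/3)) := by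
      nlinarith [mul_pos hx hx, sq_nonneg (x - 3/4),
        mul_nonneg (mul_nonneg hx.le hx.le) hx.le,
        mul_nonneg (sq_nonneg x) (sub_nonneg.2 hle),
        mul_nonneg (mul_nonneg (sq_nonneg x) (sq_nonneg x)) (sub_nonneg.2 hle),
        mul_pos hx (mul_pos hx hx)]
    nlinarith [hpoly, hA, hB, herfc, hkey]
  · -- large x : Gaussian tail bound
    have herfc : erfc x ≤ 2 / Real.sqrt Real.pi * (Real.exp (-x ^ 2) / (2 * x)) := by
      rw [erfc_eq_tail x hx.le]
      apply mul_le_mul_of_nonneg_left (tail_le x hx) (by positivity)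
    have hu : (0:ℝ) < Real.exp (-x ^ 2) := Real.exp_pos _
    have hgoal : 2 * (2 / Real.sqrt Real.pi * (Real.exp (-x ^ 2) / (2 * x)))
        < Real.exp (-x ^ 2) + Real.exp (-x ^ 2) ^ 2 := by
      rw [show (2:ℝ) * (2 / Real.sqrt Real.pi * (Real.exp (-x ^ 2) / (2 * x)))
          = Real.exp (-x ^ 2) * (2 / (Real.sqrt Real.pi * x)) by field_simp]
      have h2 : 2 / (Real.sqrt Real.pi * x) < 1 + Real.exp (-x ^ 2) := by
        rw [div_lt_iff₀ (by positivity)]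
        rcases le_or_gt x 1.2 with h12 | h12
        · have hP0 : (0:ℝ) ≤ 1 - x^2 + (x^2)^2/2 - (x^2)^3/6 := by
            nlinarith [mul_nonneg (sub_nonneg.2 h12) hx.le, sq_nonneg x, sq_nonneg (x*x),
              sq_nonneg (x-1), mul_nonneg (mul_nonneg (sub_nonneg.2 h12) hx.le) (sq_nonneg x),
              mul_nonneg (mul_nonneg (sub_nonneg.2 h12) hx.le) (sq_nonneg (x*x))]
          have h1 : 2 < 1.7724 * x * (1 + (1 - x^2 + (x^2)^2/2 - (x^2)^3/6)) := by
            nlinarith [mul_nonneg (sub_nonneg.2 hgt.le) (sub_nonneg.2 h12), sq_nonneg (x-1),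
              mul_nonneg (mul_nonneg (sub_nonneg.2 hgt.le) (sub_nonneg.2 h12)) (sq_nonneg x),
              mul_nonneg (mul_nonneg (sub_nonneg.2 hgt.le) (sub_nonneg.2 h12)) (sq_nonneg (x*x)),
              mul_nonneg (mul_nonneg (sub_nonneg.2 hgt.le) (sub_nonneg.2 h12)) (sq_nonneg (x*x*x))]
          have h2 : 1.7724 * x ≤ Real.sqrt Real.pi * x :=
            mul_le_mul_of_nonneg_right hsl hx.le
          have h3 : 1 + (1 - x^2 + (x^2)^2/2 - (x^2)^3/6) ≤ 1 + Real.exp (-x ^ 2) := by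
            linarith [hA]
          have h4 := mul_le_mul h3 h2 (by positivity) (by positivity)
          linarith
        · have h5 : (1.7724:ℝ) * 1.2 ≤ Real.sqrt Real.pi * x :=
            mul_le_mul hsl h12.le (by norm_num) hs.le
          nlinarith [hu, h5]
      nlinarith [hu, h2]
    calc 2 * erfc x ≤ 2 * (2 / Real.sqrt Real.pi * (Real.exp (-x ^ 2) / (2 * x))) := by
          linarith
      _ < _ := hgoal

theorem inverfc_lt_sqrt_log (y x : ℝ) (hy0 : 0 < y) (hy1 : y < 1) (hx : erfc x = y) :
    x < Real.sqrt (Real.log (2 / (Real.sqrt (8 * y + 1) - 1))) := by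
  have hx0 : 0 < x := by
    by_contra h
    push_neg at h
    have hint : (∫ t in (0:ℝ)..x, Real.exp (-t ^ 2)) ≤ 0 := by
      rw [← neg_nonneg, ← intervalIntegral.integral_symm]
      exact intervalIntegral.integral_nonneg h (fun t _ => (Real.exp_pos _).le)
    have hs : (0:ℝ) < Real.sqrt Real.pi := Real.sqrt_pos.2 Real.pi_pos
    have herf : erf x ≤ 0 := by
      rw [erf]
      exact mul_nonpos_of_nonneg_of_nonpos (by positivity) hint
    have : (1:ℝ) ≤ erfc x := by rw [erfc]; linarith
    linarith [hx ▸ this, hy1]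
  set u := Real.exp (-x ^ 2) with hu_def
  have hu0 : 0 < u := Real.exp_pos _
  have hu1 : u < 1 := by
    rw [hu_def, Real.exp_lt_one_iff]
    nlinarith
  have hkey : 2 * y < u + u ^ 2 := hx ▸ two_erfc_lt x hx0
  have h8 : 8 * y + 1 < (1 + 2 * u) ^ 2 := by nlinarith
  have hsq : Real.sqrt (8 * y + 1) < 1 + 2 * u :=
    (Real.sqrt_lt' (by positivity)).2 h8
  have hpos : 0 < Real.sqrt (8 * y + 1) - 1 := by
    have h1 : (1:ℝ) < Real.sqrt (8 * y + 1) :=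
      (Real.lt_sqrt zero_le_one).2 (by nlinarith)
    linarith
  have hexp : Real.exp (x ^ 2) < 2 / (Real.sqrt (8 * y + 1) - 1) := by
    have h1 : 2 / (2 * u) < 2 / (Real.sqrt (8 * y + 1) - 1) :=
      div_lt_div_of_pos_left (by norm_num) hpos (by linarith)
    have h2 : 2 / (2 * u) = Real.exp (x ^ 2) := by
      have hinv : u = (Real.exp (x ^ 2))⁻¹ := by rw [hu_def, ← Real.exp_neg]
      rw [hinv]
      field_simp
    linarith [h2 ▸ h1]
  have hlog : x ^ 2 < Real.log (2 / (Real.sqrt (8 * y + 1) - 1)) := by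
    calc x ^ 2 = Real.log (Real.exp (x ^ 2)) := (Real.log_exp _).symm
      _ < _ := Real.log_lt_log (Real.exp_pos _) hexp
  calc x = Real.sqrt (x ^ 2) := (Real.sqrt_sq hx0.le).symm
    _ < _ := Real.sqrt_lt_sqrt (sq_nonneg x) hlog
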